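/- If n > 2 and k is coprime to n, then the degree of cos(2kπ/n) over ℚ equals φ(n)/2. -/

import Mathlib

open Real Polynomial IntermediateField
set_option maxHeartbeats 1000000 in
set_option synthInstance.maxHeartbeats 400000 in

theorem degree_cos_two_pi_mul (n k : ℕ) (hn : 2 < n) (hk : Nat.Coprime k n) :
    (minpoly ℚ (Real.cos (2 * (k : ℝ) * π / (n : ℝ)))).natDegree = Nat.totient n / 2 := by
  have hn0 : (n : ℕ) ≠ 0 := by omega
  have hnpos : 0 < n := by omega
  set θ : ℝ := 2 * (k : ℝ) * π / (n : ℝ) with hθ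
  set c : ℝ := Real.cos θ with hcdef
  set ζ : ℂ := Complex.exp (θ * Complex.I) with hζdef
  -- ζ is a primitive n-th root of unity
  have hζ : ζ = Complex.exp (2 * Real.pi * Complex.I / n) ^ k := by
    rw [← Complex.exp_nat_mul, hζdef]
    congr 1
    have hnc : (n : ℂ) ≠ 0 := by exact_mod_cast hn0
    rw [hθ]
    push_cast
    field_simp
  have hprim : IsPrimitiveRoot ζ n := by
    rw [hζ]
    exact (Complex.isPrimitiveRoot_exp n hn0).pow_of_coprime k hk
  have hζ0 : ζ ≠ 0 := Complex.exp_ne_zero _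
  -- relation 2c = ζ + ζ⁻¹
  have hcc : 2 * (c : ℂ) = ζ + ζ⁻¹ := by
    rw [hcdef]
    push_cast [Complex.ofReal_cos]
    rw [Complex.cos, hζdef, ← Complex.exp_neg]
    ring_nf
  -- conj ζ = ζ⁻¹
  have hconj : (starRingEnd ℂ) ζ = ζ⁻¹ := by
    rw [hζdef, ← Complex.exp_conj, ← Complex.exp_neg]
    congr 1
    simp [Complex.conj_I, mul_comm]
  -- ζ is not real
  have hζnotreal : ζ.im ≠ 0 := by
    intro h
    have hcj : (starRingEnd ℂ) ζ = ζ := Complex.conj_eq_iff_im.2 h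
    rw [hconj] at hcj
    have h2 : ζ ^ 2 = 1 := by
      have := congrArg (· * ζ) hcj
      simpa [sq, inv_mul_cancel₀ hζ0] using this.symm
    have hdvd := hprim.dvd_of_pow_eq_one 2 h2
    have := Nat.le_of_dvd two_pos hdvd
    omega
  have hζint : IsIntegral ℚ ζ := (hprim.isIntegral hnpos).tower_top
  have hinv : ζ⁻¹ = ζ ^ (n - 1) := by
    have hmul : ζ ^ (n - 1) * ζ = 1 := by
      rw [← pow_succ]
      have hsub : n - 1 + 1 = n := by omega
      rw [hsub, hprim.pow_eq_one]
    exact inv_eq_of_mul_eq_one_left hmul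
  have hceq : (c : ℂ) = (2 : ℚ)⁻¹ • (ζ + ζ⁻¹) := by
    rw [← hcc, Rat.smul_def]
    push_cast
    ring
  have hcint : IsIntegral ℚ ((c : ℂ)) := by
    have h1 : IsIntegral ℚ ζ⁻¹ := by rw [hinv]; exact hζint.pow _
    rw [hceq]
    exact (hζint.add h1).smul _
  -- the intermediate field E = ℚ(c)
  set E : IntermediateField ℚ ℂ := ℚ⟮(c : ℂ)⟯ with hE
  have hcE : (c : ℂ) ∈ E := mem_adjoin_simple_self ℚ _
  haveI : FiniteDimensional ℚ E := adjoin.finiteDimensional hcint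
  -- ζ is not in E (E is real)
  have hζE : ζ ∉ E := by
    intro hζmem
    set K : IntermediateField ℚ ℂ := Subfield.toIntermediateField
      Complex.ofRealHom.fieldRange (fun x => ⟨(x : ℝ), by simp [Complex.ofRealHom]⟩) with hK
    have hEK : E ≤ K := by
      rw [hE, adjoin_simple_le_iff]
      exact ⟨c, rfl⟩
    obtain ⟨r, hr⟩ := hEK hζmem
    apply hζnotreal
    rw [← hr]
    simp
  -- minpoly over E of ζ has degree 2
  set c' : E := ⟨(c : ℂ), hcE⟩ with hc'
  set p : E[X] := X ^ 2 - C (2 * c') * X + 1 with hp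
  have hmonic : p.Monic := by
    rw [hp]
    monicity!
  have hroot : Polynomial.aeval ζ p = 0 := by
    have halg : (algebraMap E ℂ) c' = (c : ℂ) := rfl
    have halg2 : (algebraMap E ℂ) 2 = 2 := map_ofNat _ 2
    rw [hp]
    simp only [map_add, map_sub, map_pow, map_mul, map_one, aeval_X, aeval_C, halg, halg2]
    linear_combination (-ζ) * hcc + (-1 : ℂ) * inv_mul_cancel₀ hζ0
  have hζEint : IsIntegral E ζ := ⟨p, hmonic, hroot⟩
  have hdeg2 : (minpoly E ζ).natDegree = 2 := by
    have hle : (minpoly E ζ).natDegree ≤ 2 := by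
      have hd := minpoly.degree_le_of_ne_zero E ζ hmonic.ne_zero hroot
      have hdp : p.natDegree = 2 := by rw [hp]; compute_degree!
      calc (minpoly E ζ).natDegree ≤ p.natDegree := natDegree_le_natDegree hd
        _ = 2 := hdp
    have hge : 2 ≤ (minpoly E ζ).natDegree := by
      rw [minpoly.two_le_natDegree_iff hζEint]
      rintro ⟨y, hy⟩
      exact hζE (hy ▸ y.2)
    omega
  -- tower: totient n = finrank ℚ E * 2
  have htot : Nat.totient n = (minpoly ℚ ζ).natDegree := by
    rw [← Polynomial.cyclotomic_eq_minpoly_rat hprim hnpos, natDegree_cyclotomic]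
  have hfin1 : (minpoly ℚ ζ).natDegree = Module.finrank ℚ ℚ⟮ζ⟯ :=
    (adjoin.finrank hζint).symm
  have hEζ : (adjoin E {ζ}).restrictScalars ℚ = ℚ⟮ζ⟯ := by
    have hal := adjoin_adjoin_left ℚ {(c : ℂ)} {ζ}
    rw [← hE] at hal
    refine hal.trans ?_
    apply le_antisymm
    · rw [adjoin_le_iff]
      rintro x (rfl | rfl)
      · have h1 : ζ ∈ ℚ⟮ζ⟯ := mem_adjoin_simple_self ℚ ζ
        have h2 : ζ⁻¹ ∈ ℚ⟮ζ⟯ := inv_mem h1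
        rw [hceq]
        exact smul_mem _ (add_mem h1 h2)
      · exact mem_adjoin_simple_self ℚ ζ
    · apply adjoin.mono
      intro x hx
      exact Set.mem_insert_iff.2 (Or.inr hx)
  have hfin2 : Module.finrank ℚ ℚ⟮ζ⟯ = Module.finrank ℚ E * 2 := by
    rw [← hEζ]
    have h1 : Module.finrank ℚ E * Module.finrank E (adjoin E {ζ} : IntermediateField E ℂ)
        = Module.finrank ℚ (adjoin E {ζ} : IntermediateField E ℂ) :=
      Module.finrank_mul_finrank ℚ E _
    have h2 : Module.finrank E (adjoin E {ζ} : IntermediateField E ℂ) = 2 := by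
      rw [adjoin.finrank hζEint, hdeg2]
    have e : ((adjoin E {ζ}).restrictScalars ℚ : IntermediateField ℚ ℂ) ≃ₗ[ℚ]
        (adjoin E {ζ} : IntermediateField E ℂ) :=
      { toFun := fun x => ⟨x.1, x.2⟩
        invFun := fun x => ⟨x.1, x.2⟩
        map_add' := fun _ _ => rfl
        map_smul' := fun _ _ => rfl
        left_inv := fun _ => rfl
        right_inv := fun _ => rfl }
    rw [e.finrank_eq, ← h1, h2]
  -- the real minpoly degree equals finrank ℚ E
  have hreal : (minpoly ℚ c).natDegree = Module.finrank ℚ E := by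
    have hmap : minpoly ℚ ((c : ℂ)) = minpoly ℚ c :=
      minpoly.algebraMap_eq Complex.ofReal_injective c
    rw [← hmap, hE, adjoin.finrank hcint]
  rw [hreal]
  omega
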